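/- Let (μ_k) be a sequence of concave functions ℝ → ℝ converging locally uniformly to a concave function ν, let (c_k) be a real sequence converging to c, and let (λ_k) be a sequence of reals with μ_k(λ_k) = λ_k² − c_k λ_k for all k. Assume the sequences (μ_k(0)) and (μ_k'(0)) are bounded. Then (λ_k) is bounded, and every accumulation point λ∞ of (λ_k) satisfies ν(λ∞) = λ∞² − c λ∞. -/
import Mathlib


open Filter

/-- A concave function on `ℝ` lies below its tangent line at `0`. -/
lemma concave_le_tangent {f : ℝ → ℝ} (hf : ConcaveOn ℝ Set.univ f)
    (hd : DifferentiableAt ℝ f 0) (x : ℝ) : f x ≤ f 0 + deriv f 0 * x := by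
  rcases lt_trichotomy x 0 with h | h | h
  · have hs := hf.deriv_le_slope (Set.mem_univ x) (Set.mem_univ 0) h hd
    rw [slope_def_field] at hs
    have hx : (0 : ℝ) < 0 - x := by linarith
    rw [le_div_iff₀ hx] at hs
    nlinarith
  · simp [h]
  · have hs := hf.slope_le_deriv (Set.mem_univ 0) (Set.mem_univ x) h hd
    rw [slope_def_field] at hs
    rw [div_le_iff₀ (by linarith : (0:ℝ) < x - 0)] at hs
    nlinarith

/-- Lemma 3 (lemmath1) in abstract form: if concave `μ k` converge locally uniformly
to a concave `ν`, `c k → c`, `μ k (λ k) = λ k ² - c k * λ k`, with `(μ k 0)` and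
`(μ k)'(0)` bounded, then `(λ k)` is bounded and every accumulation point `λ∞`
satisfies `ν λ∞ = λ∞² - c λ∞`. -/
theorem accumulation_points_of_roots (μ : ℕ → ℝ → ℝ) (ν : ℝ → ℝ) (c : ℝ)
    (cseq lam : ℕ → ℝ)
    (hconc : ∀ k, ConcaveOn ℝ Set.univ (μ k)) (hν : ConcaveOn ℝ Set.univ ν)
    (hdiff : ∀ k, DifferentiableAt ℝ (μ k) 0)
    (hcv : TendstoLocallyUniformly μ ν atTop)
    (hc : Tendsto cseq atTop (nhds c))
    (heq : ∀ k, μ k (lam k) = (lam k) ^ 2 - cseq k * lam k)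
    (hb0 : ∃ M, ∀ k, |μ k 0| ≤ M)
    (hb1 : ∃ M, ∀ k, |deriv (μ k) 0| ≤ M) :
    (∃ M, ∀ k, |lam k| ≤ M) ∧
    ∀ linf : ℝ, MapClusterPt linf atTop lam → ν linf = linf ^ 2 - c * linf := by
  obtain ⟨M0, hM0⟩ := hb0
  obtain ⟨M1, hM1⟩ := hb1
  -- `cseq` is bounded
  obtain ⟨A, hA⟩ := hc.bddAbove_range
  obtain ⟨B, hB⟩ := hc.bddBelow_range
  set C : ℝ := max |A| |B| with hC
  have hCb : ∀ k, |cseq k| ≤ C := by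
    intro k
    have h1 : cseq k ≤ A := hA ⟨k, rfl⟩
    have h2 : B ≤ cseq k := hB ⟨k, rfl⟩
    have := le_abs_self A
    have := neg_abs_le B
    have := le_max_left |A| |B|
    have := le_max_right |A| |B|
    rw [abs_le]; constructor <;> linarith
  have hM0' : (0:ℝ) ≤ M0 := le_trans (abs_nonneg _) (hM0 0)
  have hM1' : (0:ℝ) ≤ M1 := le_trans (abs_nonneg _) (hM1 0)
  have hC' : (0:ℝ) ≤ C := le_trans (abs_nonneg _) (hCb 0)
  -- boundedness of `lam`
  have hbdd : ∀ k, |lam k| ≤ 1 + M0 + M1 + C := by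
    intro k
    have htan := concave_le_tangent (hconc k) (hdiff k) (lam k)
    rw [heq k] at htan
    have h1 : deriv (μ k) 0 * lam k ≤ M1 * |lam k| := by
      calc deriv (μ k) 0 * lam k ≤ |deriv (μ k) 0 * lam k| := le_abs_self _
        _ = |deriv (μ k) 0| * |lam k| := abs_mul _ _
        _ ≤ M1 * |lam k| := by
            exact mul_le_mul_of_nonneg_right (hM1 k) (abs_nonneg _)
    have h2 : cseq k * lam k ≤ C * |lam k| := by
      calc cseq k * lam k ≤ |cseq k * lam k| := le_abs_self _
        _ = |cseq k| * |lam k| := abs_mul _ _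
        _ ≤ C * |lam k| := mul_le_mul_of_nonneg_right (hCb k) (abs_nonneg _)
    have h3 : μ k 0 ≤ M0 := le_trans (le_abs_self _) (hM0 k)
    have hsq : |lam k| ^ 2 ≤ M0 + (M1 + C) * |lam k| := by
      have : lam k ^ 2 = |lam k| ^ 2 := (sq_abs _).symm
      nlinarith
    by_contra hcon
    push_neg at hcon
    nlinarith [abs_nonneg (lam k)]
  refine ⟨⟨1 + M0 + M1 + C, hbdd⟩, ?_⟩
  intro linf hcl
  obtain ⟨ψ, hψ, hlim⟩ := TopologicalSpace.FirstCountableTopology.tendsto_subseq hcl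
  have hψt : Tendsto ψ atTop atTop := hψ.tendsto_atTop
  have hcv' : TendstoLocallyUniformly (fun j => μ (ψ j)) ν atTop := by
    intro u hu x
    obtain ⟨t, ht, h⟩ := hcv u hu x
    exact ⟨t, ht, hψt.eventually h⟩
  have hνc : Continuous ν := hν.locallyLipschitz.continuous
  have h1 : Tendsto (fun j => μ (ψ j) (lam (ψ j))) atTop (nhds (ν linf)) :=
    hcv'.tendsto_comp hνc.continuousAt hlim
  have h2 : Tendsto (fun j => lam (ψ j) ^ 2 - cseq (ψ j) * lam (ψ j)) atTop
      (nhds (linf ^ 2 - c * linf)) := by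
    have hl : Tendsto (fun j => lam (ψ j)) atTop (nhds linf) := hlim
    have hcc : Tendsto (fun j => cseq (ψ j)) atTop (nhds c) := hc.comp hψt
    exact (hl.pow 2).sub (hcc.mul hl)
  have h1' : Tendsto (fun j => lam (ψ j) ^ 2 - cseq (ψ j) * lam (ψ j)) atTop
      (nhds (ν linf)) := by
    simpa only [heq] using h1
  exact tendsto_nhds_unique h1' h2
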